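/- Let q₀ > 0 and θ₊ ∈ (0, π) with θ₊ ≠ π/2. Define ξ(x,t) := q₀ cos θ₊ · (x + 2 q₀ t sin θ₊), and on the open set Ω := { (x,t) : ξ(x,t) ≠ 0 } define q(x,t) := q₀ e^{2 i q₀² t} · [ (1 + e^{4 ξ(x,t)} + 2 e^{2 ξ(x,t)}) cos θ₊ + i sin θ₊ ( e^{4 ξ(x,t)} - 1 ) ] / ( e^{4 ξ(x,t)} - 1 ). Then (-x,-t) ∈ Ω whenever (x,t) ∈ Ω, and for all (x,t) ∈ Ω, q satisfies i ∂_t q(x,t) = ∂_x² q(x,t) + 2 q(x,t)² q(-x,-t). That is, q is a bright one-soliton solution of the nonlocal reverse space-time NLS equation with σ = -1, singular exactly along the space-time line ξ(x,t) = 0. -/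

import Mathlib

noncomputable def solh (v : ℝ) : ℝ := (Real.exp (2*v) + 1) / (Real.exp (2*v) - 1)

lemma solh_den_ne {v : ℝ} (hv : v ≠ 0) : Real.exp (2*v) - 1 ≠ 0 := by
  have : Real.exp (2*v) ≠ 1 := fun h =>
    hv (by have := Real.exp_eq_one_iff (2*v) |>.mp h; linarith)
  intro h; exact this (by linarith)

lemma solh_neg {v : ℝ} (hv : v ≠ 0) : solh (-v) = - solh v := by
  have h1 := solh_den_ne hv
  have h2 := solh_den_ne (neg_ne_zero.mpr hv)
  have he : Real.exp (2*(-v)) = (Real.exp (2*v))⁻¹ := by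
    rw [← Real.exp_neg]; ring_nf
  have hpos := Real.exp_ne_zero (2*v)
  have h2' : (Real.exp (2*v))⁻¹ - 1 ≠ 0 := by rw [← he]; exact h2
  unfold solh
  rw [he, div_eq_iff h2']
  rw [show -((Real.exp (2*v) + 1) / (Real.exp (2*v) - 1)) * ((Real.exp (2*v))⁻¹ - 1)
      = (-((Real.exp (2*v) + 1) * ((Real.exp (2*v))⁻¹ - 1))) / (Real.exp (2*v) - 1) by ring,
    eq_div_iff h1]
  field_simp
  ring

lemma solh_hasDerivAt {v : ℝ} (hv : v ≠ 0) : HasDerivAt solh (1 - solh v ^ 2) v := by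
  have he : HasDerivAt (fun w : ℝ => Real.exp (2*w)) (Real.exp (2*v) * 2) v := by
    simpa using (((hasDerivAt_id v).const_mul 2)).exp
  have h1 := solh_den_ne hv
  have := (he.add_const 1).fun_div (he.sub_const 1) h1
  refine this.congr_deriv ?_
  unfold solh
  field_simp
  ring

lemma qform_aux (q₀ c s v t : ℝ) (hv : v ≠ 0) :
  (q₀:ℂ) * Complex.exp (2*Complex.I*(q₀:ℂ)^2*(t:ℂ)) *
    ((((1 + Real.exp (4*v) + 2*Real.exp (2*v)) * c : ℝ):ℂ) + Complex.I * ((s * (Real.exp (4*v) - 1) : ℝ):ℂ)) /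
    ((Real.exp (4*v) - 1 : ℝ):ℂ)
  = (q₀:ℂ) * Complex.exp (2*Complex.I*(q₀:ℂ)^2*(t:ℂ)) * ((c:ℂ) * (solh v : ℂ) + Complex.I * (s:ℂ)) := by
  have h4 : Real.exp (4*v) = Real.exp (2*v) * Real.exp (2*v) := by
    rw [← Real.exp_add]; ring_nf
  set e : ℂ := ((Real.exp (2*v):ℝ):ℂ) with he
  have hne1 : Real.exp (2*v) ≠ 1 := fun h =>
    hv (by have := Real.exp_eq_one_iff (2*v) |>.mp h; linarith)
  have h1 : e - 1 ≠ 0 := by rw [he, sub_ne_zero]; exact_mod_cast hne1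
  have hD : e^2 - 1 ≠ 0 := by
    have h2 : e + 1 ≠ 0 := by
      rw [he]
      have : (0:ℝ) < Real.exp (2*v) + 1 := by positivity
      exact_mod_cast ne_of_gt this
    exact fun h => (mul_ne_zero h1 h2) (by linear_combination h)
  have hsol : (solh v : ℂ) = (e+1)/(e-1) := by
    unfold solh; rw [he]; push_cast [-Complex.ofReal_exp]; ring
  have hDval : ((Real.exp (4*v) - 1 : ℝ):ℂ) = e^2 - 1 := by
    rw [he]; push_cast [-Complex.ofReal_exp, h4]; ring
  have hnum : (((1 + Real.exp (4*v) + 2*Real.exp (2*v)) * c : ℝ):ℂ) = (1 + e^2 + 2*e)*(c:ℂ) := by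
    rw [he]; push_cast [-Complex.ofReal_exp, h4]; ring
  have hnum2 : ((s * (Real.exp (4*v) - 1) : ℝ):ℂ) = (s:ℂ) * (e^2 - 1) := by
    rw [he]; push_cast [-Complex.ofReal_exp, h4]; ring
  have hJ : (e-1) * (e-1)⁻¹ = 1 := mul_inv_cancel₀ h1
  rw [hnum, hnum2, hDval, hsol, div_eq_iff hD]
  linear_combination (-(q₀:ℂ) * Complex.exp (2*Complex.I*(q₀:ℂ)^2*(t:ℂ)) * ↑c * (e+1)^2) * hJ

set_option maxHeartbeats 1000000 in
theorem rst_nls_singular_bright_one_soliton (q₀ θp : ℝ) (hq₀ : 0 < q₀)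
    (hθ : θp ∈ Set.Ioo 0 Real.pi) (hθ' : θp ≠ Real.pi / 2)
    (ξ : ℝ → ℝ → ℝ)
    (hξ : ∀ x t : ℝ, ξ x t = q₀ * Real.cos θp * (x + 2 * q₀ * t * Real.sin θp))
    (q : ℝ → ℝ → ℂ)
    (hq : ∀ x t : ℝ, q x t =
      (q₀ : ℂ) * Complex.exp (2 * Complex.I * (q₀ : ℂ) ^ 2 * (t : ℂ)) *
        ((((1 + Real.exp (4 * ξ x t) + 2 * Real.exp (2 * ξ x t)) * Real.cos θp : ℝ) : ℂ) +
          Complex.I * ((Real.sin θp * (Real.exp (4 * ξ x t) - 1) : ℝ) : ℂ)) /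
        ((Real.exp (4 * ξ x t) - 1 : ℝ) : ℂ)) :
    (∀ x t : ℝ, ξ x t ≠ 0 → ξ (-x) (-t) ≠ 0) ∧
    (∀ x t : ℝ, ξ x t ≠ 0 →
      Complex.I * deriv (fun τ : ℝ => q x τ) t =
        deriv (fun y : ℝ => deriv (fun y' : ℝ => q y' t) y) x
          + 2 * (q x t) ^ 2 * q (-x) (-t)) := by
  set c := Real.cos θp with hc
  set s := Real.sin θp with hs
  have hnegxi : ∀ x t : ℝ, ξ (-x) (-t) = -(ξ x t) := by
    intro x t; rw [hξ, hξ]; ring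
  constructor
  · intro x t hne
    rw [hnegxi]; exact neg_ne_zero.mpr hne
  intro x t hne
  -- derivative of ξ in each variable
  have hξt : ∀ (x t : ℝ), HasDerivAt (fun τ : ℝ => ξ x τ) (2*q₀^2*c*s) t := by
    intro x t
    have : (fun τ : ℝ => ξ x τ) = fun τ => q₀*c*x + (2*q₀^2*c*s)*τ := by
      funext τ; rw [hξ]; ring
    rw [this]
    simpa using ((hasDerivAt_id t).const_mul (2*q₀^2*c*s)).const_add (q₀*c*x)
  have hξx : ∀ (t x : ℝ), HasDerivAt (fun y : ℝ => ξ y t) (q₀*c) x := by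
    intro t x
    have : (fun y : ℝ => ξ y t) = fun y => (q₀*c)*y + q₀*c*(2*q₀*t*s) := by
      funext y; rw [hξ]; ring
    rw [this]
    simpa using ((hasDerivAt_id x).const_mul (q₀*c)).add_const (q₀*c*(2*q₀*t*s))
  -- closed form of q off the singular line
  have hqform : ∀ (x t : ℝ), ξ x t ≠ 0 →
      q x t = (q₀:ℂ) * Complex.exp (2*Complex.I*(q₀:ℂ)^2*(t:ℂ)) *
        ((c:ℂ) * (solh (ξ x t) : ℂ) + Complex.I * (s:ℂ)) := by
    intro x t h
    rw [hq]; exact qform_aux q₀ c s (ξ x t) t h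
  set E : ℂ := Complex.exp (2*Complex.I*(q₀:ℂ)^2*(t:ℂ)) with hE
  set hv : ℝ := solh (ξ x t) with hhv
  -- time derivative
  have hA : HasDerivAt (fun τ:ℝ => Complex.exp (2*Complex.I*(q₀:ℂ)^2*(τ:ℂ)))
      (2*Complex.I*(q₀:ℂ)^2 * E) t := by
    have h0 : HasDerivAt (fun τ:ℝ => ((τ:ℝ):ℂ)) 1 t := by
      simpa using (hasDerivAt_id t).ofReal_comp
    have h1 := (h0.const_mul (2*Complex.I*(q₀:ℂ)^2)).cexp
    convert h1 using 1
    rw [hE]; ring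
  have hB : HasDerivAt (fun τ:ℝ => ((c:ℂ)*(solh (ξ x τ):ℂ) + Complex.I*(s:ℂ)))
      ((c:ℂ) * (((1 - hv^2) * (2*q₀^2*c*s) : ℝ):ℂ)) t := by
    have hcomp : HasDerivAt (fun τ => solh (ξ x τ)) ((1 - hv^2) * (2*q₀^2*c*s)) t :=
      (solh_hasDerivAt hne).comp t (hξt x t)
    exact ((hcomp.ofReal_comp).const_mul (c:ℂ)).add_const _
  have hGt : deriv (fun τ : ℝ => q x τ) t
      = (q₀:ℂ) * ((2*Complex.I*(q₀:ℂ)^2 * E) * ((c:ℂ)*(hv:ℂ) + Complex.I*(s:ℂ))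
          + E * ((c:ℂ) * (((1 - hv^2) * (2*q₀^2*c*s) : ℝ):ℂ))) := by
    have hevt : ∀ᶠ τ in nhds t, ξ x τ ≠ 0 := (hξt x t).continuousAt.eventually_ne hne
    have heq : (fun τ : ℝ => q x τ) =ᶠ[nhds t]
        (fun τ => (q₀:ℂ) * (Complex.exp (2*Complex.I*(q₀:ℂ)^2*(τ:ℂ)) *
          ((c:ℂ)*(solh (ξ x τ):ℂ) + Complex.I*(s:ℂ)))) := by
      filter_upwards [hevt] with τ hτ
      rw [hqform x τ hτ]; ring
    rw [heq.deriv_eq]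
    exact (((hA.mul hB).const_mul (q₀:ℂ)).deriv)
  -- inner space derivative
  have inner : ∀ y : ℝ, ξ y t ≠ 0 → deriv (fun y' : ℝ => q y' t) y
      = (q₀:ℂ) * (E * ((c:ℂ) * (((1 - solh (ξ y t)^2) * (q₀*c) : ℝ):ℂ))) := by
    intro y hy
    have hev : ∀ᶠ z in nhds y, ξ z t ≠ 0 := (hξx t y).continuousAt.eventually_ne hy
    have heq : (fun y' : ℝ => q y' t) =ᶠ[nhds y]
        (fun y' => (q₀:ℂ) * (E * ((c:ℂ)*(solh (ξ y' t):ℂ) + Complex.I*(s:ℂ)))) := by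
      filter_upwards [hev] with z hz
      rw [hqform z t hz, hE]; ring
    rw [heq.deriv_eq]
    have hcomp : HasDerivAt (fun y' => solh (ξ y' t)) ((1 - solh (ξ y t)^2)*(q₀*c)) y :=
      by have := (solh_hasDerivAt hy).comp y (hξx t y); exact this
    exact (((((hcomp.ofReal_comp).const_mul (c:ℂ)).add_const (Complex.I*(s:ℂ))).const_mul E).const_mul (q₀:ℂ)).deriv
  -- outer space derivative
  have hGxx : deriv (fun y : ℝ => deriv (fun y' : ℝ => q y' t) y) x
      = (q₀:ℂ) * (E * ((c:ℂ) * (((-(2*hv*((1 - hv^2)*(q₀*c))))*(q₀*c) : ℝ):ℂ))) := by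
    have hev : ∀ᶠ y in nhds x, ξ y t ≠ 0 := (hξx t x).continuousAt.eventually_ne hne
    have heq : (fun y : ℝ => deriv (fun y' : ℝ => q y' t) y) =ᶠ[nhds x]
        (fun y => (q₀:ℂ) * (E * ((c:ℂ) * (((1 - solh (ξ y t)^2) * (q₀*c) : ℝ):ℂ)))) := by
      filter_upwards [hev] with y hy
      exact inner y hy
    rw [heq.deriv_eq]
    have hcomp : HasDerivAt (fun y => solh (ξ y t)) ((1 - hv^2)*(q₀*c)) x :=
      by have := (solh_hasDerivAt hne).comp x (hξx t x); exact this
    have hsq : HasDerivAt (fun y => solh (ξ y t)^2) (2*hv*((1 - hv^2)*(q₀*c))) x := by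
      simpa [hhv, mul_comm, mul_assoc] using hcomp.fun_pow 2
    have hreal : HasDerivAt (fun y => (1 - solh (ξ y t)^2)*(q₀*c))
        ((-(2*hv*((1 - hv^2)*(q₀*c))))*(q₀*c)) x := by
      simpa using (hsq.const_sub 1).mul_const (q₀*c)
    exact ((((hreal.ofReal_comp).const_mul (c:ℂ)).const_mul E).const_mul (q₀:ℂ)).deriv
  -- the reflected value
  have hqneg : q (-x) (-t) = (q₀:ℂ) * Complex.exp (2*Complex.I*(q₀:ℂ)^2*((-t:ℝ):ℂ)) *
      ((c:ℂ) * ((-hv : ℝ):ℂ) + Complex.I * (s:ℂ)) := by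
    rw [hqform (-x) (-t) (by rw [hnegxi]; exact neg_ne_zero.mpr hne), hnegxi, solh_neg hne]
  have hqval : q x t = (q₀:ℂ) * E * ((c:ℂ) * (hv:ℂ) + Complex.I * (s:ℂ)) :=
    hqform x t hne
  -- assemble
  rw [hGt, hGxx, hqval, hqneg]
  have hEE : E * Complex.exp (2*Complex.I*(q₀:ℂ)^2*((-t:ℝ):ℂ)) = 1 := by
    rw [hE, ← Complex.exp_add, show 2*Complex.I*(q₀:ℂ)^2*(t:ℂ) + 2*Complex.I*(q₀:ℂ)^2*((-t:ℝ):ℂ) = 0 by push_cast; ring, Complex.exp_zero]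
  have hsc : (s:ℂ)^2 + (c:ℂ)^2 = 1 := by
    rw [hs, hc]; exact_mod_cast Real.sin_sq_add_cos_sq θp
  push_cast at hEE ⊢
  linear_combination (q₀:ℂ)^3*E*(2*(c:ℂ)*(hv:ℂ)+2*Complex.I*(s:ℂ))*(1-(s:ℂ)^2)*Complex.I_sq
    + (q₀:ℂ)^3*E*(2*(c:ℂ)*(hv:ℂ)+2*Complex.I*(s:ℂ))*hsc
    - 2*(q₀:ℂ)^3*E*((c:ℂ)*(hv:ℂ)+Complex.I*(s:ℂ))^2*(-(c:ℂ)*(hv:ℂ)+Complex.I*(s:ℂ))*hEE
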